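/- arXiv:2308.01591 — 4 statements merged into one kernel-verified Lean document; each statement's English description precedes it below -/
import Mathlib

section
/- Let e, d ∈ ℕ, a ∈ ℝ^e and c ∈ [0,1]. Let b : ℝ^e → ℝ^e be C² with b, ∇b, ∇²b bounded, let σ : ℝ^e → ℝ^{e×d} be C¹ with σ and ∇σ bounded, and let x : [0,1] → ℝ^d be C¹. Then there exists a unique pair of C¹ paths (y^0, ẑ) : [0,1] → ℝ^e × ℝ^e such that y^0_0 = a, (y^0)'_t = b(y^0_t) for all t, ẑ_0 = 0, and ẑ'_t = ∫₀¹ ∇b(y^0_t + θ c ẑ_t)⟨ẑ_t⟩ dθ + σ(y^0_t + c ẑ_t) x'_t for all t ∈ [0,1]. In particular no explosion occurs on [0,1]. -/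
open Set MeasureTheory

section Aux

variable {E : Type*} [NormedAddCommGroup E] [NormedSpace ℝ E]

/-- Truncation (radial projection) onto the closed ball of radius `R`. -/
noncomputable def stmt10Proj (R : ℝ) (z : E) : E := if ‖z‖ ≤ R then z else (R / ‖z‖) • z

lemma stmt10Proj_eq {R : ℝ} {z : E} (h : ‖z‖ ≤ R) : stmt10Proj R z = z := if_pos h

lemma stmt10Proj_norm_le {R : ℝ} (hR : 0 ≤ R) (z : E) : ‖stmt10Proj R z‖ ≤ R := by
  unfold stmt10Proj
  split_ifs with h
  · exact h
  · push_neg at h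
    have hz : 0 < ‖z‖ := lt_of_le_of_lt hR h
    rw [norm_smul, Real.norm_eq_abs, abs_of_nonneg (div_nonneg hR hz.le),
      div_mul_cancel₀ _ hz.ne']

lemma stmt10Proj_norm_le_self {R : ℝ} (hR : 0 ≤ R) (z : E) : ‖stmt10Proj R z‖ ≤ ‖z‖ := by
  unfold stmt10Proj
  split_ifs with h
  · exact le_rfl
  · push_neg at h
    have hz : 0 < ‖z‖ := lt_of_le_of_lt hR h
    rw [norm_smul, Real.norm_eq_abs, abs_of_nonneg (div_nonneg hR hz.le),
      div_mul_cancel₀ _ hz.ne']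
    exact h.le

lemma stmt10Proj_lip {R : ℝ} (hR : 0 ≤ R) (p q : E) :
    ‖stmt10Proj R p - stmt10Proj R q‖ ≤ 2 * ‖p - q‖ := by
  have main : ∀ p q : E, ‖q‖ ≤ ‖p‖ → ‖stmt10Proj R p - stmt10Proj R q‖ ≤ 2 * ‖p - q‖ := by
    intro p q hqp
    by_cases hp : ‖p‖ ≤ R
    · have hq : ‖q‖ ≤ R := hqp.trans hp
      rw [stmt10Proj_eq hp, stmt10Proj_eq hq]
      linarith [norm_nonneg (p - q)]
    · push_neg at hp
      have hp0 : 0 < ‖p‖ := lt_of_le_of_lt hR hp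
      have hd : ‖p‖ - ‖q‖ ≤ ‖p - q‖ := by
        have := norm_sub_norm_le p q
        linarith [this]
      by_cases hq : ‖q‖ ≤ R
      · rw [stmt10Proj_eq hq]
        unfold stmt10Proj
        rw [if_neg (not_le.mpr hp)]
        have t1 : ‖(R / ‖p‖) • p - q‖ ≤ ‖(R / ‖p‖) • p - p‖ + ‖p - q‖ :=
          norm_sub_le_norm_sub_add_norm_sub _ _ _
        have t2 : ‖(R / ‖p‖) • p - p‖ = ‖p‖ - R := by
          have h1 : (R / ‖p‖) • p - p = (R / ‖p‖ - 1) • p := by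
            rw [sub_smul, one_smul]
          rw [h1, norm_smul, Real.norm_eq_abs,
            abs_of_nonpos (by rw [sub_nonpos, div_le_one hp0]; exact hp.le)]
          field_simp
          ring
        linarith
      · push_neg at hq
        have hq0 : 0 < ‖q‖ := lt_of_le_of_lt hR hq
        unfold stmt10Proj
        rw [if_neg (not_le.mpr hp), if_neg (not_le.mpr hq)]
        have t0 : ‖(R / ‖p‖) • p - (R / ‖q‖) • q‖ ≤
            ‖(R / ‖p‖) • p - (R / ‖p‖) • q‖ + ‖(R / ‖p‖) • q - (R / ‖q‖) • q‖ :=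
          norm_sub_le_norm_sub_add_norm_sub _ _ _
        have t1 : ‖(R / ‖p‖) • p - (R / ‖p‖) • q‖ = R / ‖p‖ * ‖p - q‖ := by
          rw [← smul_sub, norm_smul, Real.norm_eq_abs,
            abs_of_nonneg (div_nonneg hR hp0.le)]
        have t2 : ‖(R / ‖p‖) • q - (R / ‖q‖) • q‖ = (R / ‖q‖ - R / ‖p‖) * ‖q‖ := by
          rw [← sub_smul, norm_smul, Real.norm_eq_abs, abs_of_nonpos, neg_sub]
          rw [sub_nonpos]
          exact div_le_div_of_nonneg_left hR hq0 hqp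
        have e1 : (R / ‖q‖ - R / ‖p‖) * ‖q‖ = R / ‖p‖ * (‖p‖ - ‖q‖) := by
          field_simp
        have hu1 : R / ‖p‖ ≤ 1 := by rw [div_le_one hp0]; exact hp.le
        have hu0 : 0 ≤ R / ‖p‖ := div_nonneg hR hp0.le
        have hpq0 : (0:ℝ) ≤ ‖p - q‖ := norm_nonneg _
        nlinarith [mul_le_mul_of_nonneg_left hd hu0,
          mul_le_mul_of_nonneg_right hu1 hpq0]
  rcases le_total ‖q‖ ‖p‖ with h | h
  · exact main p q h
  · rw [norm_sub_rev, norm_sub_rev p q]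
    exact main q p h

lemma stmt10Proj_cont {R : ℝ} (hR : 0 ≤ R) : Continuous (stmt10Proj (E := E) R) := by
  have : LipschitzWith (Real.toNNReal 2) (stmt10Proj (E := E) R) :=
    LipschitzWith.of_dist_le' fun p q => by
      simpa [dist_eq_norm] using stmt10Proj_lip hR p q
  exact this.continuous

/-- The averaged gradient term. -/
noncomputable def stmt10G (c : ℝ) (b : E → E) (y z : E) : E :=
  if c = 0 then fderiv ℝ b y z else c⁻¹ • (b (y + c • z) - b y)

lemma stmt10G_lip {b : E → E} {Lb : ℝ} (hbd : Differentiable ℝ b)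
    (hLb : ∀ y, ‖fderiv ℝ b y‖ ≤ Lb) (c : ℝ) (y z₁ z₂ : E) :
    ‖stmt10G c b y z₁ - stmt10G c b y z₂‖ ≤ Lb * ‖z₁ - z₂‖ := by
  have hblip : ∀ p q : E, ‖b p - b q‖ ≤ Lb * ‖p - q‖ := fun p q =>
    Convex.norm_image_sub_le_of_norm_fderiv_le (fun x _ => hbd x)
      (fun x _ => hLb x) convex_univ (mem_univ q) (mem_univ p)
  unfold stmt10G
  split_ifs with hc
  · rw [← map_sub]
    exact le_trans ((fderiv ℝ b y).le_opNorm _)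
      (mul_le_mul_of_nonneg_right (hLb y) (norm_nonneg _))
  · rw [← smul_sub, sub_sub_sub_cancel_right, norm_smul, Real.norm_eq_abs, abs_inv]
    have h1 : (y + c • z₁) - (y + c • z₂) = c • (z₁ - z₂) := by
      rw [smul_sub]; abel
    have h2 : ‖b (y + c • z₁) - b (y + c • z₂)‖ ≤ Lb * (|c| * ‖z₁ - z₂‖) := by
      calc ‖b (y + c • z₁) - b (y + c • z₂)‖ ≤ Lb * ‖(y + c • z₁) - (y + c • z₂)‖ :=
            hblip _ _
        _ = Lb * (|c| * ‖z₁ - z₂‖) := by rw [h1, norm_smul, Real.norm_eq_abs]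
    have hc0 : (0:ℝ) < |c| := abs_pos.mpr hc
    calc |c|⁻¹ * ‖b (y + c • z₁) - b (y + c • z₂)‖ ≤ |c|⁻¹ * (Lb * (|c| * ‖z₁ - z₂‖)) :=
          mul_le_mul_of_nonneg_left h2 (by positivity)
      _ = Lb * ‖z₁ - z₂‖ := by field_simp

lemma stmt10G_zero (c : ℝ) (b : E → E) (y : E) : stmt10G c b y 0 = 0 := by
  unfold stmt10G
  split_ifs with hc
  · exact (fderiv ℝ b y).map_zero
  · simp

lemma stmt10G_growth {b : E → E} {Lb : ℝ} (hbd : Differentiable ℝ b)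
    (hLb : ∀ y, ‖fderiv ℝ b y‖ ≤ Lb) (c : ℝ) (y z : E) :
    ‖stmt10G c b y z‖ ≤ Lb * ‖z‖ := by
  simpa [stmt10G_zero] using stmt10G_lip hbd hLb c y z 0

lemma stmt10G_cont {b : E → E} (hb : ContDiff ℝ 2 b) (c : ℝ) :
    Continuous fun p : E × E => stmt10G c b p.1 p.2 := by
  unfold stmt10G
  split_ifs with hc
  · exact ((hb.continuous_fderiv (by norm_num)).comp continuous_fst).clm_apply continuous_snd
  · exact continuous_const.smul
      (((hb.continuous.comp (continuous_fst.add (continuous_const.smul continuous_snd)))).sub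
        (hb.continuous.comp continuous_fst))

lemma stmt10_integral {E : Type*} [NormedAddCommGroup E] [NormedSpace ℝ E] [CompleteSpace E]
    {b : E → E} (hb : ContDiff ℝ 2 b) (c : ℝ) (y z : E) :
    (∫ θ in (0:ℝ)..1, fderiv ℝ b (y + (θ * c) • z) z) = stmt10G c b y z := by
  unfold stmt10G
  by_cases hc : c = 0
  · subst hc
    rw [if_pos rfl]
    simp only [mul_zero, zero_smul, add_zero]
    rw [intervalIntegral.integral_const]
    simp
  · rw [if_neg hc]
    have hbd : Differentiable ℝ b := hb.differentiable (by norm_num)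
    have key : ∀ θ : ℝ, HasDerivAt (fun θ : ℝ => c⁻¹ • b (y + (θ * c) • z))
        (fderiv ℝ b (y + (θ * c) • z) z) θ := by
      intro θ
      have h1 : HasDerivAt (fun θ : ℝ => y + (θ * c) • z) (c • z) θ := by
        have h0 : HasDerivAt (fun θ : ℝ => θ * c) c θ := by
          simpa using (hasDerivAt_id θ).mul_const c
        simpa using (h0.smul_const z).const_add y
      have h2 := (hbd (y + (θ * c) • z)).hasFDerivAt.comp_hasDerivAt θ h1
      have h3 := h2.const_smul c⁻¹
      convert h3 using 1
      · rfl
      rw [(fderiv ℝ b (y + (θ * c) • z)).map_smul, smul_smul, inv_mul_cancel₀ hc, one_smul]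
    have hcont : Continuous fun θ : ℝ => fderiv ℝ b (y + (θ * c) • z) z :=
      ((hb.continuous_fderiv (by norm_num)).comp (by continuity)).clm_apply continuous_const
    rw [intervalIntegral.integral_eq_sub_of_hasDerivAt (fun θ _ => key θ)
      (hcont.intervalIntegrable 0 1)]
    simp [smul_sub]

lemma stmt10_gb_mono {K ε : ℝ} (hK : 0 ≤ K) (hε : 0 ≤ ε) {x y : ℝ} (h : x ≤ y) :
    gronwallBound 0 K ε x ≤ gronwallBound 0 K ε y := by
  rcases eq_or_lt_of_le hK with hK0 | hK0
  · rw [← hK0, gronwallBound_K0]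
    simp only [zero_add]
    nlinarith
  · simp only [gronwallBound_of_K_ne_0 hK0.ne']
    simp only [zero_mul, zero_add]
    have hexp : Real.exp (K * x) ≤ Real.exp (K * y) :=
      Real.exp_le_exp.mpr (mul_le_mul_of_nonneg_left h hK)
    have hd : 0 ≤ ε / K := div_nonneg hε hK
    nlinarith

lemma stmt10_contG {b : E → E} (hb : ContDiff ℝ 2 b) (c : ℝ) {y0 : ℝ → E} {s : Set ℝ}
    (hy0 : ContinuousOn y0 s) (w : E) : ContinuousOn (fun t => stmt10G c b (y0 t) w) s :=
  (stmt10G_cont hb c).comp_continuousOn (hy0.prodMk continuousOn_const)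

lemma stmt10_contG2 {b : E → E} (hb : ContDiff ℝ 2 b) (c : ℝ) {y0 w : ℝ → E} {s : Set ℝ}
    (hy0 : ContinuousOn y0 s) (hw : ContinuousOn w s) :
    ContinuousOn (fun t => stmt10G c b (y0 t) (w t)) s :=
  (stmt10G_cont hb c).comp_continuousOn (hy0.prodMk hw)

end Aux


set_option maxHeartbeats 4000000 in
/-- Global existence and uniqueness on `[0,1]` of the coupled system
`(y⁰)' = b(y⁰)`, `y⁰_0 = a`, and
`ẑ' = ∫₀¹ ∇b(y⁰ + θc ẑ)⟨ẑ⟩ dθ + σ(y⁰ + c ẑ) x'`, `ẑ_0 = 0`,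
for a `C¹` driving path `x`; in particular no explosion occurs. -/
theorem stmt_10 (e d : ℕ) (a : EuclideanSpace ℝ (Fin e)) (c : ℝ) (hc : c ∈ Set.Icc (0:ℝ) 1)
    (b : EuclideanSpace ℝ (Fin e) → EuclideanSpace ℝ (Fin e)) (hb : ContDiff ℝ 2 b)
    (hb0 : BddAbove (Set.range fun y => ‖b y‖))
    (hb1 : BddAbove (Set.range fun y => ‖fderiv ℝ b y‖))
    (hb2 : BddAbove (Set.range fun y => ‖fderiv ℝ (fderiv ℝ b) y‖))
    (σ : EuclideanSpace ℝ (Fin e) →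
      (EuclideanSpace ℝ (Fin d) →L[ℝ] EuclideanSpace ℝ (Fin e)))
    (hσ : ContDiff ℝ 1 σ)
    (hσ0 : BddAbove (Set.range fun y => ‖σ y‖))
    (hσ1 : BddAbove (Set.range fun y => ‖fderiv ℝ σ y‖))
    (x x' : ℝ → EuclideanSpace ℝ (Fin d))
    (hx : ∀ t, HasDerivAt x (x' t) t) (hx' : Continuous x') :
    (∃ y0 z : ℝ → EuclideanSpace ℝ (Fin e),
      ContDiffOn ℝ 1 y0 (Set.Icc 0 1) ∧ ContDiffOn ℝ 1 z (Set.Icc 0 1) ∧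
      y0 0 = a ∧ z 0 = 0 ∧
      (∀ t ∈ Set.Icc (0:ℝ) 1, HasDerivAt y0 (b (y0 t)) t) ∧
      (∀ t ∈ Set.Icc (0:ℝ) 1, HasDerivAt z
        ((∫ θ in (0:ℝ)..1, fderiv ℝ b (y0 t + (θ * c) • z t) (z t)) +
          σ (y0 t + c • z t) (x' t)) t)) ∧
    (∀ y0 z y1 z1 : ℝ → EuclideanSpace ℝ (Fin e),
      y0 0 = a → z 0 = 0 →
      (∀ t ∈ Set.Icc (0:ℝ) 1, HasDerivAt y0 (b (y0 t)) t) →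
      (∀ t ∈ Set.Icc (0:ℝ) 1, HasDerivAt z
        ((∫ θ in (0:ℝ)..1, fderiv ℝ b (y0 t + (θ * c) • z t) (z t)) +
          σ (y0 t + c • z t) (x' t)) t) →
      y1 0 = a → z1 0 = 0 →
      (∀ t ∈ Set.Icc (0:ℝ) 1, HasDerivAt y1 (b (y1 t)) t) →
      (∀ t ∈ Set.Icc (0:ℝ) 1, HasDerivAt z1
        ((∫ θ in (0:ℝ)..1, fderiv ℝ b (y1 t + (θ * c) • z1 t) (z1 t)) +
          σ (y1 t + c • z1 t) (x' t)) t) →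
      ∀ t ∈ Set.Icc (0:ℝ) 1, y0 t = y1 t ∧ z t = z1 t) := by
  classical
  obtain ⟨hc0, hc1⟩ := hc
  have hcabs : |c| ≤ 1 := by rw [abs_of_nonneg hc0]; exact hc1
  have hbd : Differentiable ℝ b := hb.differentiable (by norm_num)
  have hσd : Differentiable ℝ σ := hσ.differentiable (by norm_num)
  set Mb := sSup (Set.range fun y => ‖b y‖) with hMbdef
  have hMb : ∀ y, ‖b y‖ ≤ Mb := fun y => le_csSup hb0 ⟨y, rfl⟩
  have hMb0 : 0 ≤ Mb := le_trans (norm_nonneg _) (hMb 0)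
  set Lb := sSup (Set.range fun y => ‖fderiv ℝ b y‖) with hLbdef
  have hLb : ∀ y, ‖fderiv ℝ b y‖ ≤ Lb := fun y => le_csSup hb1 ⟨y, rfl⟩
  have hLb0 : 0 ≤ Lb := le_trans (norm_nonneg _) (hLb 0)
  have hblip : ∀ p q, ‖b p - b q‖ ≤ Lb * ‖p - q‖ := fun p q =>
    Convex.norm_image_sub_le_of_norm_fderiv_le (fun y _ => hbd y)
      (fun y _ => hLb y) convex_univ (Set.mem_univ q) (Set.mem_univ p)
  set Mσ := sSup (Set.range fun y => ‖σ y‖) with hMσdef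
  have hMσ : ∀ y, ‖σ y‖ ≤ Mσ := fun y => le_csSup hσ0 ⟨y, rfl⟩
  have hMσ0 : 0 ≤ Mσ := le_trans (norm_nonneg _) (hMσ 0)
  set Lσ := sSup (Set.range fun y => ‖fderiv ℝ σ y‖) with hLσdef
  have hLσ : ∀ y, ‖fderiv ℝ σ y‖ ≤ Lσ := fun y => le_csSup hσ1 ⟨y, rfl⟩
  have hLσ0 : 0 ≤ Lσ := le_trans (norm_nonneg (fderiv ℝ σ 0)) (hLσ 0)
  have hσlip : ∀ p q, ‖σ p - σ q‖ ≤ Lσ * ‖p - q‖ := fun p q =>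
    Convex.norm_image_sub_le_of_norm_fderiv_le (fun y _ => hσd y)
      (fun y _ => hLσ y) convex_univ (Set.mem_univ q) (Set.mem_univ p)
  set Mx := sSup ((fun t => ‖x' t‖) '' Set.Icc (-1:ℝ) 2) with hMxdef
  have hMxB : BddAbove ((fun t => ‖x' t‖) '' Set.Icc (-1:ℝ) 2) :=
    (isCompact_Icc.image hx'.norm).bddAbove
  have hMx : ∀ t ∈ Set.Icc (-1:ℝ) 2, ‖x' t‖ ≤ Mx := fun t ht => le_csSup hMxB ⟨t, ht, rfl⟩
  have hMx0 : 0 ≤ Mx := le_trans (norm_nonneg _) (hMx 0 (by norm_num))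
  have hIccIoo : Set.Icc (0:ℝ) 1 ⊆ Set.Ioo (-1:ℝ) 2 := fun t ht =>
    ⟨by linarith [ht.1], by linarith [ht.2]⟩
  have hIccIcc : Set.Icc (0:ℝ) 1 ⊆ Set.Icc (-1:ℝ) 2 := fun t ht =>
    ⟨by linarith [ht.1], by linarith [ht.2]⟩
  -- Step 1: existence of y0
  have hy0pl : IsPicardLindelof (fun _ y => b y) (⟨0, by norm_num⟩ : Set.Icc (-1:ℝ) 2) a
      (Mb * 2 + 1).toNNReal 0 Mb.toNNReal Lb.toNNReal := by
    refine ⟨?_, fun z _ => continuousOn_const,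
      fun t _ z _ => (hMb z).trans (Real.le_coe_toNNReal Mb), ?_⟩
    · intro t _
      exact LipschitzOnWith.of_dist_le' fun p _ q _ => by
        simpa [dist_eq_norm] using hblip p q
    · have h2 : (Mb.toNNReal : ℝ) * max ((2:ℝ) - 0) (0 - (-1)) ≤
          ((Mb * 2 + 1).toNNReal : ℝ) - ((0:NNReal) : ℝ) := by
        rw [Real.coe_toNNReal _ hMb0, Real.coe_toNNReal _ (by positivity)]
        have : max ((2:ℝ) - 0) (0 - (-1)) = 2 := by norm_num
        rw [this, NNReal.coe_zero, sub_zero]; linarith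
      exact h2
  obtain ⟨y0, hy0a, hy0deriv⟩ := hy0pl.exists_eq_forall_mem_Icc_hasDerivWithinAt₀
  have hy0deriv' : ∀ t ∈ Set.Ioo (-1:ℝ) 2, HasDerivAt y0 (b (y0 t)) t := fun t ht =>
    (hy0deriv t (Set.Ioo_subset_Icc_self ht)).hasDerivAt (Icc_mem_nhds ht.1 ht.2)
  have hy0cont : ContinuousOn y0 (Set.Icc (-1:ℝ) 2) := fun t ht =>
    (hy0deriv t ht).continuousWithinAt
  -- constants for z
  set M0 := Mσ * Mx with hM0def
  have hM00 : 0 ≤ M0 := mul_nonneg hMσ0 hMx0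
  set K' := gronwallBound 0 Lb M0 1 with hK'def
  have hK'0 : 0 ≤ K' := by
    have := stmt10_gb_mono hLb0 hM00 (zero_le_one (α := ℝ))
    rw [gronwallBound_x0] at this
    exact this
  set R := K' + 1 with hRdef
  have hR0 : (0:ℝ) ≤ R := by linarith
  set Cz := Lb * R + M0 with hCzdef
  have hCz0 : 0 ≤ Cz := by positivity
  set v : ℝ → EuclideanSpace ℝ (Fin e) → EuclideanSpace ℝ (Fin e) := fun t ζ =>
    stmt10G c b (y0 t) (stmt10Proj R ζ) +
      σ (y0 t + c • stmt10Proj R ζ) (x' t) with hvdef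
  have hGlip := stmt10G_lip hbd hLb c
  have hGnorm := stmt10G_growth hbd hLb c
  -- Lipschitz estimate for the (untruncated) field, used both for v and for uniqueness
  have hcore : ∀ (y : EuclideanSpace ℝ (Fin e)) (s : ℝ), s ∈ Set.Icc (-1:ℝ) 2 →
      ∀ ζ₁ ζ₂ : EuclideanSpace ℝ (Fin e),
      ‖(stmt10G c b y ζ₁ + σ (y + c • ζ₁) (x' s)) -
        (stmt10G c b y ζ₂ + σ (y + c • ζ₂) (x' s))‖ ≤ (Lb + Lσ * Mx) * ‖ζ₁ - ζ₂‖ := by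
    intro y s hs ζ₁ ζ₂
    have h1 : ‖stmt10G c b y ζ₁ - stmt10G c b y ζ₂‖ ≤ Lb * ‖ζ₁ - ζ₂‖ := hGlip y ζ₁ ζ₂
    have h2 : ‖σ (y + c • ζ₁) (x' s) - σ (y + c • ζ₂) (x' s)‖ ≤ Lσ * Mx * ‖ζ₁ - ζ₂‖ := by
      have e1 : σ (y + c • ζ₁) (x' s) - σ (y + c • ζ₂) (x' s) =
          (σ (y + c • ζ₁) - σ (y + c • ζ₂)) (x' s) := by
        rw [ContinuousLinearMap.sub_apply]
      rw [e1]
      have h3 : ‖σ (y + c • ζ₁) - σ (y + c • ζ₂)‖ ≤ Lσ * ‖ζ₁ - ζ₂‖ := by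
        have := hσlip (y + c • ζ₁) (y + c • ζ₂)
        have e2 : (y + c • ζ₁) - (y + c • ζ₂) = c • (ζ₁ - ζ₂) := by
          rw [smul_sub]; abel
        rw [e2, norm_smul, Real.norm_eq_abs] at this
        calc ‖σ (y + c • ζ₁) - σ (y + c • ζ₂)‖ ≤ Lσ * (|c| * ‖ζ₁ - ζ₂‖) := this
          _ ≤ Lσ * (1 * ‖ζ₁ - ζ₂‖) := by
              apply mul_le_mul_of_nonneg_left _ hLσ0
              exact mul_le_mul_of_nonneg_right hcabs (norm_nonneg _)
          _ = Lσ * ‖ζ₁ - ζ₂‖ := by ring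
      calc ‖(σ (y + c • ζ₁) - σ (y + c • ζ₂)) (x' s)‖ ≤
            ‖σ (y + c • ζ₁) - σ (y + c • ζ₂)‖ * ‖x' s‖ :=
            ContinuousLinearMap.le_opNorm _ _
        _ ≤ (Lσ * ‖ζ₁ - ζ₂‖) * Mx :=
            mul_le_mul h3 (hMx s hs) (norm_nonneg _)
              (mul_nonneg hLσ0 (norm_nonneg _))
        _ = Lσ * Mx * ‖ζ₁ - ζ₂‖ := by ring
    calc ‖(stmt10G c b y ζ₁ + σ (y + c • ζ₁) (x' s)) -
          (stmt10G c b y ζ₂ + σ (y + c • ζ₂) (x' s))‖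
        = ‖(stmt10G c b y ζ₁ - stmt10G c b y ζ₂) +
            (σ (y + c • ζ₁) (x' s) - σ (y + c • ζ₂) (x' s))‖ := by rw [add_sub_add_comm]
      _ ≤ ‖stmt10G c b y ζ₁ - stmt10G c b y ζ₂‖ +
            ‖σ (y + c • ζ₁) (x' s) - σ (y + c • ζ₂) (x' s)‖ := norm_add_le _ _
      _ ≤ Lb * ‖ζ₁ - ζ₂‖ + Lσ * Mx * ‖ζ₁ - ζ₂‖ := add_le_add h1 h2
      _ = (Lb + Lσ * Mx) * ‖ζ₁ - ζ₂‖ := by ring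
  have hvlip : ∀ t ∈ Set.Icc (-1:ℝ) 2, ∀ ζ₁ ζ₂ : EuclideanSpace ℝ (Fin e),
      ‖v t ζ₁ - v t ζ₂‖ ≤ 2 * (Lb + Lσ * Mx) * ‖ζ₁ - ζ₂‖ := by
    intro t ht ζ₁ ζ₂
    simp only [hvdef]
    calc ‖(stmt10G c b (y0 t) (stmt10Proj R ζ₁) + σ (y0 t + c • stmt10Proj R ζ₁) (x' t)) -
          (stmt10G c b (y0 t) (stmt10Proj R ζ₂) + σ (y0 t + c • stmt10Proj R ζ₂) (x' t))‖
        ≤ (Lb + Lσ * Mx) * ‖stmt10Proj R ζ₁ - stmt10Proj R ζ₂‖ :=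
          hcore (y0 t) t ht _ _
      _ ≤ (Lb + Lσ * Mx) * (2 * ‖ζ₁ - ζ₂‖) := by
          apply mul_le_mul_of_nonneg_left (stmt10Proj_lip hR0 ζ₁ ζ₂)
          positivity
      _ = 2 * (Lb + Lσ * Mx) * ‖ζ₁ - ζ₂‖ := by ring
  have hvnorm : ∀ t ∈ Set.Icc (-1:ℝ) 2, ∀ ζ : EuclideanSpace ℝ (Fin e), ‖v t ζ‖ ≤ Cz := by
    intro t ht ζ
    simp only [hvdef]
    have h1 : ‖stmt10G c b (y0 t) (stmt10Proj R ζ)‖ ≤ Lb * R :=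
      le_trans (hGnorm _ _) (mul_le_mul_of_nonneg_left (stmt10Proj_norm_le hR0 ζ) hLb0)
    have h2 : ‖σ (y0 t + c • stmt10Proj R ζ) (x' t)‖ ≤ M0 := by
      calc ‖σ (y0 t + c • stmt10Proj R ζ) (x' t)‖ ≤
            ‖σ (y0 t + c • stmt10Proj R ζ)‖ * ‖x' t‖ := ContinuousLinearMap.le_opNorm _ _
        _ ≤ Mσ * Mx := mul_le_mul (hMσ _) (hMx t ht) (norm_nonneg _) hMσ0
    calc ‖stmt10G c b (y0 t) (stmt10Proj R ζ) + σ (y0 t + c • stmt10Proj R ζ) (x' t)‖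
        ≤ ‖stmt10G c b (y0 t) (stmt10Proj R ζ)‖ +
          ‖σ (y0 t + c • stmt10Proj R ζ) (x' t)‖ := norm_add_le _ _
      _ ≤ Lb * R + M0 := add_le_add h1 h2
  have hzpl : IsPicardLindelof v (⟨0, by norm_num⟩ : Set.Icc (-1:ℝ) 2)
      (0 : EuclideanSpace ℝ (Fin e))
      (Cz * 2 + 1).toNNReal 0 Cz.toNNReal (2 * (Lb + Lσ * Mx)).toNNReal := by
    refine ⟨?_, ?_, fun t ht ζ _ => (hvnorm t ht ζ).trans (Real.le_coe_toNNReal Cz), ?_⟩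
    · intro t ht
      exact LipschitzOnWith.of_dist_le' fun p _ q _ => by
        simpa [dist_eq_norm] using hvlip t ht p q
    · intro ζ _
      have h1 : ∀ w : EuclideanSpace ℝ (Fin e),
          ContinuousOn (fun t => stmt10G c b (y0 t) w) (Set.Icc (-1:ℝ) 2) := fun w =>
        stmt10_contG hb c hy0cont w
      have h2 : ∀ w : EuclideanSpace ℝ (Fin e), ContinuousOn (fun t => σ (y0 t + c • w) (x' t))
          (Set.Icc (-1:ℝ) 2) := fun w =>
        ContinuousOn.clm_apply
          (hσ.continuous.comp_continuousOn (hy0cont.add continuousOn_const))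
          hx'.continuousOn
      exact (h1 (stmt10Proj R ζ)).add (h2 (stmt10Proj R ζ))
    · have h2 : (Cz.toNNReal : ℝ) * max ((2:ℝ) - 0) (0 - (-1)) ≤
          ((Cz * 2 + 1).toNNReal : ℝ) - ((0:NNReal) : ℝ) := by
        rw [Real.coe_toNNReal _ hCz0, Real.coe_toNNReal _ (by positivity)]
        have : max ((2:ℝ) - 0) (0 - (-1)) = 2 := by norm_num
        rw [this, NNReal.coe_zero, sub_zero]; linarith
      exact h2
  obtain ⟨z, hz0, hzderiv⟩ := hzpl.exists_eq_forall_mem_Icc_hasDerivWithinAt₀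
  have hzderiv' : ∀ t ∈ Set.Ioo (-1:ℝ) 2, HasDerivAt z (v t (z t)) t := fun t ht =>
    (hzderiv t (Set.Ioo_subset_Icc_self ht)).hasDerivAt (Icc_mem_nhds ht.1 ht.2)
  have hzcont : ContinuousOn z (Set.Icc (-1:ℝ) 2) := fun t ht =>
    (hzderiv t ht).continuousWithinAt
  -- a priori bound
  have hbound : ∀ t ∈ Set.Icc (0:ℝ) 1, ‖z t‖ ≤ K' := by
    intro t ht
    have h1 := norm_le_gronwallBound_of_norm_deriv_right_le
      (f := z) (f' := fun s => v s (z s)) (δ := 0) (K := Lb) (ε := M0) (a := 0) (b := 1)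
      (hzcont.mono hIccIcc)
      (fun s hs => (hzderiv' s (hIccIoo (Set.Ico_subset_Icc_self hs))).hasDerivWithinAt)
      (by simp [hz0])
      (fun s hs => by
        simp only [hvdef]
        have hsI : s ∈ Set.Icc (-1:ℝ) 2 := hIccIcc (Set.Ico_subset_Icc_self hs)
        have h1 : ‖stmt10G c b (y0 s) (stmt10Proj R (z s))‖ ≤ Lb * ‖z s‖ :=
          le_trans (hGnorm _ _)
            (mul_le_mul_of_nonneg_left (stmt10Proj_norm_le_self hR0 (z s)) hLb0)
        have h2 : ‖σ (y0 s + c • stmt10Proj R (z s)) (x' s)‖ ≤ M0 := by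
          calc ‖σ (y0 s + c • stmt10Proj R (z s)) (x' s)‖ ≤
                ‖σ (y0 s + c • stmt10Proj R (z s))‖ * ‖x' s‖ :=
                ContinuousLinearMap.le_opNorm _ _
            _ ≤ Mσ * Mx := mul_le_mul (hMσ _) (hMx s hsI) (norm_nonneg _) hMσ0
        calc ‖stmt10G c b (y0 s) (stmt10Proj R (z s)) + σ (y0 s + c • stmt10Proj R (z s)) (x' s)‖
            ≤ ‖stmt10G c b (y0 s) (stmt10Proj R (z s))‖ +
              ‖σ (y0 s + c • stmt10Proj R (z s)) (x' s)‖ := norm_add_le _ _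
          _ ≤ Lb * ‖z s‖ + M0 := add_le_add h1 h2)
      t ht
    calc ‖z t‖ ≤ gronwallBound 0 Lb M0 (t - 0) := h1
      _ ≤ K' := by
          rw [hK'def]
          exact stmt10_gb_mono hLb0 hM00 (by linarith [ht.2])
  have hPz : ∀ t ∈ Set.Icc (0:ℝ) 1, stmt10Proj R (z t) = z t := fun t ht =>
    stmt10Proj_eq (le_trans (hbound t ht) (by linarith))
  have hy0derivIcc : ∀ t ∈ Set.Icc (0:ℝ) 1, HasDerivAt y0 (b (y0 t)) t := fun t ht =>
    hy0deriv' t (hIccIoo ht)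
  have hzfinal : ∀ t ∈ Set.Icc (0:ℝ) 1, HasDerivAt z
      ((∫ θ in (0:ℝ)..1, fderiv ℝ b (y0 t + (θ * c) • z t) (z t)) +
        σ (y0 t + c • z t) (x' t)) t := by
    intro t ht
    have h := hzderiv' t (hIccIoo ht)
    rw [stmt10_integral hb c]
    have e1 : v t (z t) = stmt10G c b (y0 t) (z t) + σ (y0 t + c • z t) (x' t) := by
      simp only [hvdef, hPz t ht]
    rwa [e1] at h
  -- smoothness
  have hy0cd : ContDiffOn ℝ 1 y0 (Set.Icc (0:ℝ) 1) := by
    have h1 : ContDiffOn ℝ ((0:ℕ) + 1) y0 (Set.Ioo (-1:ℝ) 2) := by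
      rw [contDiffOn_succ_iff_deriv_of_isOpen isOpen_Ioo]
      refine ⟨fun t ht => (hy0deriv' t ht).differentiableAt.differentiableWithinAt,
        by simp, ?_⟩
      have hcont : ContinuousOn (deriv y0) (Set.Ioo (-1:ℝ) 2) := by
        apply ContinuousOn.congr (f := fun t => b (y0 t))
        · exact hb.continuous.comp_continuousOn (hy0cont.mono Set.Ioo_subset_Icc_self)
        · exact fun t ht => (hy0deriv' t ht).deriv
      exact_mod_cast contDiffOn_zero.mpr hcont
    exact (h1.mono hIccIoo).congr (fun t _ => rfl) |>.of_le (by norm_num)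
  have hzcd : ContDiffOn ℝ 1 z (Set.Icc (0:ℝ) 1) := by
    have h1 : ContDiffOn ℝ ((0:ℕ) + 1) z (Set.Ioo (-1:ℝ) 2) := by
      rw [contDiffOn_succ_iff_deriv_of_isOpen isOpen_Ioo]
      refine ⟨fun t ht => (hzderiv' t ht).differentiableAt.differentiableWithinAt,
        by simp, ?_⟩
      have hcont : ContinuousOn (deriv z) (Set.Ioo (-1:ℝ) 2) := by
        apply ContinuousOn.congr (f := fun t => v t (z t))
        · simp only [hvdef]
          have hzc : ContinuousOn z (Set.Ioo (-1:ℝ) 2) := hzcont.mono Set.Ioo_subset_Icc_self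
          have hy0c : ContinuousOn y0 (Set.Ioo (-1:ℝ) 2) := hy0cont.mono Set.Ioo_subset_Icc_self
          apply ContinuousOn.add
          · exact stmt10_contG2 hb c hy0c ((stmt10Proj_cont hR0).comp_continuousOn hzc)
          · exact ContinuousOn.clm_apply
              (hσ.continuous.comp_continuousOn
                (hy0c.add (((stmt10Proj_cont hR0).comp_continuousOn hzc).const_smul c)))
              hx'.continuousOn
        · exact fun t ht => (hzderiv' t ht).deriv
      exact_mod_cast contDiffOn_zero.mpr hcont
    exact (h1.mono hIccIoo).of_le (by norm_num)
  refine ⟨⟨y0, z, hy0cd, hzcd, hy0a, hz0, hy0derivIcc, hzfinal⟩, ?_⟩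
  -- uniqueness
  intro ya za yb zb hya0 hza0 hyad hzad hyb0 hzb0 hybd hzbd
  have hyeq : Set.EqOn ya yb (Set.Icc (0:ℝ) 1) := by
    apply ODE_solution_unique_of_mem_Icc_right
      (v := fun _ y => b y) (s := fun _ => Set.univ)
      (fun t _ => LipschitzOnWith.of_dist_le' fun p _ q _ => by
        simpa [dist_eq_norm] using hblip p q)
      (fun t ht => (hyad t ht).continuousAt.continuousWithinAt)
      (fun t ht => (hyad t (Set.Ico_subset_Icc_self ht)).hasDerivWithinAt)
      (fun _ _ => Set.mem_univ _)
      (fun t ht => (hybd t ht).continuousAt.continuousWithinAt)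
      (fun t ht => (hybd t (Set.Ico_subset_Icc_self ht)).hasDerivWithinAt)
      (fun _ _ => Set.mem_univ _)
      (hya0.trans hyb0.symm)
  set w : ℝ → EuclideanSpace ℝ (Fin e) → EuclideanSpace ℝ (Fin e) := fun t ζ =>
    stmt10G c b (ya t) ζ + σ (ya t + c • ζ) (x' (min 1 (max 0 t))) with hwdef
  have hclamp : ∀ t : ℝ, min 1 (max 0 t) ∈ Set.Icc (-1:ℝ) 2 := by
    intro t
    constructor
    · have : (0:ℝ) ≤ max 0 t := le_max_left 0 t
      have : (0:ℝ) ≤ min 1 (max 0 t) := le_min zero_le_one this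
      linarith
    · have : min 1 (max 0 t) ≤ 1 := min_le_left _ _
      linarith
  have hclampeq : ∀ t ∈ Set.Icc (0:ℝ) 1, min 1 (max 0 t) = t := by
    intro t ht
    rw [max_eq_right ht.1, min_eq_right ht.2]
  have hzeq : Set.EqOn za zb (Set.Icc (0:ℝ) 1) := by
    apply ODE_solution_unique_of_mem_Icc_right
      (v := w) (s := fun _ => Set.univ)
      (fun t _ => LipschitzOnWith.of_dist_le' fun p _ q _ => by
        simpa [dist_eq_norm] using hcore (ya t) (min 1 (max 0 t)) (hclamp t) p q)
      (fun t ht => (hzad t ht).continuousAt.continuousWithinAt)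
      (fun t ht => ?_)
      (fun _ _ => Set.mem_univ _)
      (fun t ht => (hzbd t ht).continuousAt.continuousWithinAt)
      (fun t ht => ?_)
      (fun _ _ => Set.mem_univ _)
      (hza0.trans hzb0.symm)
    · have htI : t ∈ Set.Icc (0:ℝ) 1 := Set.Ico_subset_Icc_self ht
      have h := hzad t htI
      rw [stmt10_integral hb c] at h
      have e1 : w t (za t) = stmt10G c b (ya t) (za t) + σ (ya t + c • za t) (x' t) := by
        simp only [hwdef, hclampeq t htI]
      rw [e1]
      exact h.hasDerivWithinAt
    · have htI : t ∈ Set.Icc (0:ℝ) 1 := Set.Ico_subset_Icc_self ht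
      have h := hzbd t htI
      rw [stmt10_integral hb c] at h
      have e1 : w t (zb t) = stmt10G c b (yb t) (zb t) + σ (yb t + c • zb t) (x' t) := by
        simp only [hwdef, hclampeq t htI, hyeq htI]
      rw [e1]
      exact h.hasDerivWithinAt
  exact fun t ht => ⟨hyeq ht, hzeq ht⟩
end

section
/- Let e, d ∈ ℕ, a ∈ ℝ^e and c ∈ [0,1]. Let b : ℝ^e → ℝ^e be C¹ with ∇b bounded, let σ : ℝ^e → ℝ^{e×d} be bounded, and let x : [0,1] → ℝ^d be C¹. Suppose y^0, ẑ : [0,1] → ℝ^e are differentiable with y^0_0 = a, (y^0)'_t = b(y^0_t), ẑ_0 = 0, and ẑ'_t = ∫₀¹ ∇b(y^0_t + θ c ẑ_t)⟨ẑ_t⟩ dθ + σ(y^0_t + c ẑ_t) x'_t for all t ∈ [0,1]. Then sup_{t∈[0,1]} |ẑ_t| ≤ ‖σ‖_∞ (∫₀¹ |x'_s| ds) e^{‖∇b‖_∞}, where ‖σ‖_∞ = sup_y ‖σ(y)‖ and ‖∇b‖_∞ = sup_y ‖∇b(y)‖ (operator norms). -/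
open Set MeasureTheory

/-- Gronwall-type a priori bound:
`sup_{t ∈ [0,1]} |ẑ_t| ≤ ‖σ‖_∞ (∫₀¹ |x'_s| ds) e^{‖∇b‖_∞}`. -/
theorem stmt_11 (e d : ℕ) (a : EuclideanSpace ℝ (Fin e)) (c : ℝ) (hc : c ∈ Set.Icc (0:ℝ) 1)
    (b : EuclideanSpace ℝ (Fin e) → EuclideanSpace ℝ (Fin e)) (hb : ContDiff ℝ 1 b)
    (hdb : BddAbove (Set.range fun y => ‖fderiv ℝ b y‖))
    (σ : EuclideanSpace ℝ (Fin e) →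
      (EuclideanSpace ℝ (Fin d) →L[ℝ] EuclideanSpace ℝ (Fin e)))
    (hσ0 : BddAbove (Set.range fun y => ‖σ y‖))
    (x x' : ℝ → EuclideanSpace ℝ (Fin d))
    (hx : ∀ t, HasDerivAt x (x' t) t) (hx' : Continuous x')
    (y0 z : ℝ → EuclideanSpace ℝ (Fin e))
    (hy00 : y0 0 = a) (hz0 : z 0 = 0)
    (hy0 : ∀ t ∈ Set.Icc (0:ℝ) 1, HasDerivAt y0 (b (y0 t)) t)
    (hz : ∀ t ∈ Set.Icc (0:ℝ) 1, HasDerivAt z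
      ((∫ θ in (0:ℝ)..1, fderiv ℝ b (y0 t + (θ * c) • z t) (z t)) +
        σ (y0 t + c • z t) (x' t)) t) :
    ∀ t ∈ Set.Icc (0:ℝ) 1,
      ‖z t‖ ≤ (⨆ y, ‖σ y‖) * (∫ s in (0:ℝ)..1, ‖x' s‖) *
        Real.exp (⨆ y, ‖fderiv ℝ b y‖) := by
  set M : ℝ := ⨆ y, ‖fderiv ℝ b y‖ with hMdef
  set S : ℝ := ⨆ y, ‖σ y‖ with hSdef
  have hMle : ∀ y, ‖fderiv ℝ b y‖ ≤ M := fun y => le_ciSup hdb y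
  have hSle : ∀ y, ‖σ y‖ ≤ S := fun y => le_ciSup hσ0 y
  have hM0 : 0 ≤ M := le_trans (norm_nonneg _) (hMle a)
  have hS0 : 0 ≤ S := le_trans (norm_nonneg _) (hSle a)
  -- clamp function
  set cl : ℝ → ℝ := fun s => max 0 (min 1 s) with hcldef
  have hcl_cont : Continuous cl := continuous_const.max (continuous_const.min continuous_id)
  have hcl_mem : ∀ s, cl s ∈ Icc (0:ℝ) 1 :=
    fun s => ⟨le_max_left _ _, max_le zero_le_one (min_le_left _ _)⟩
  have hcl_eq : ∀ s ∈ Icc (0:ℝ) 1, cl s = s := by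
    intro s hs
    simp only [hcldef]
    rw [min_eq_right hs.2, max_eq_right hs.1]
  -- continuity of z on Icc
  have hzc : ContinuousOn z (Icc (0:ℝ) 1) :=
    fun s hs => (hz s hs).continuousAt.continuousWithinAt
  have hzcl : Continuous fun s => z (cl s) := hzc.comp_continuous hcl_cont hcl_mem
  -- the bound function E
  set E : ℝ → ℝ := fun s => M * ‖z (cl s)‖ + S * ‖x' s‖ with hEdef
  have hE_cont : Continuous E :=
    ((continuous_const.mul hzcl.norm).add (continuous_const.mul hx'.norm))
  have hE0 : ∀ s, 0 ≤ E s :=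
    fun s => add_nonneg (mul_nonneg hM0 (norm_nonneg _)) (mul_nonneg hS0 (norm_nonneg _))
  set g : ℝ → ℝ := fun u => ∫ s in (0:ℝ)..u, E s with hgdef
  have hg : ∀ u, HasDerivAt g (E u) u :=
    fun u => (hE_cont.integral_hasStrictDerivAt 0 u).hasDerivAt
  -- bound on the derivative of z
  have hbound : ∀ s ∈ Icc (0:ℝ) 1, ‖deriv z s‖ ≤ E s := by
    intro s hs
    rw [(hz s hs).deriv]
    have h1 : ‖∫ θ in (0:ℝ)..1, fderiv ℝ b (y0 s + (θ * c) • z s) (z s)‖ ≤ M * ‖z s‖ := by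
      have := intervalIntegral.norm_integral_le_of_norm_le_const
        (C := M * ‖z s‖) (a := (0:ℝ)) (b := 1)
        (f := fun θ => fderiv ℝ b (y0 s + (θ * c) • z s) (z s)) ?_
      · simpa using this
      · intro θ _
        exact le_trans ((fderiv ℝ b _).le_opNorm _)
          (mul_le_mul_of_nonneg_right (hMle _) (norm_nonneg _))
    have h2 : ‖σ (y0 s + c • z s) (x' s)‖ ≤ S * ‖x' s‖ :=
      le_trans ((σ _).le_opNorm _) (mul_le_mul_of_nonneg_right (hSle _) (norm_nonneg _))
    calc ‖(∫ θ in (0:ℝ)..1, fderiv ℝ b (y0 s + (θ * c) • z s) (z s)) +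
            σ (y0 s + c • z s) (x' s)‖
        ≤ ‖∫ θ in (0:ℝ)..1, fderiv ℝ b (y0 s + (θ * c) • z s) (z s)‖ +
            ‖σ (y0 s + c • z s) (x' s)‖ := norm_add_le _ _
      _ ≤ M * ‖z s‖ + S * ‖x' s‖ := add_le_add h1 h2
      _ = E s := by rw [hEdef]; simp only [hcl_eq s hs]
  -- Step A: ‖z u‖ ≤ g u on Icc
  have zle : ∀ u ∈ Icc (0:ℝ) 1, ‖z u‖ ≤ g u := by
    intro u hu
    have hsub : uIcc (0:ℝ) u ⊆ Icc (0:ℝ) 1 := by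
      rw [uIcc_of_le hu.1]; exact Icc_subset_Icc le_rfl hu.2
    have hIoc : Set.uIoc (0:ℝ) u ⊆ Icc (0:ℝ) 1 := by
      rw [uIoc_of_le hu.1]; exact (Ioc_subset_Icc_self).trans (Icc_subset_Icc le_rfl hu.2)
    have hEint : IntervalIntegrable E volume 0 u := hE_cont.intervalIntegrable 0 u
    have hae : ∀ᵐ s ∂(volume.restrict (Set.uIoc (0:ℝ) u)), ‖deriv z s‖ ≤ E s := by
      refine (ae_restrict_iff' measurableSet_uIoc).2 (ae_of_all _ ?_)
      exact fun s hs => hbound s (hIoc hs)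
    have hzint : IntervalIntegrable (deriv z) volume 0 u := by
      refine hEint.mono_fun (aestronglyMeasurable_deriv z _) ?_
      refine hae.mono fun s hs => hs.trans ?_
      exact le_abs_self _
    have hftc : ∫ s in (0:ℝ)..u, deriv z s = z u - z 0 := by
      refine intervalIntegral.integral_eq_sub_of_hasDerivAt (fun s hs => ?_) hzint
      have h := hz s (hsub hs)
      rw [h.deriv]; exact h
    have h3 : ‖∫ s in (0:ℝ)..u, deriv z s‖ ≤ |∫ s in (0:ℝ)..u, E s| :=
      intervalIntegral.norm_integral_le_abs_of_norm_le hae hEint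
    rw [hftc, hz0, sub_zero] at h3
    refine h3.trans ?_
    rw [abs_of_nonneg (intervalIntegral.integral_nonneg hu.1 fun s _ => hE0 s)]
  -- integrating factor
  set w : ℝ → ℝ := fun s => Real.exp (-(M * s)) * (S * ‖x' s‖) with hwdef
  have hw_cont : Continuous w :=
    (Real.continuous_exp.comp (continuous_const.mul continuous_id).neg).mul
      (continuous_const.mul hx'.norm)
  set h : ℝ → ℝ := fun u => Real.exp (-(M * u)) * g u - ∫ s in (0:ℝ)..u, w s with hhdef
  have hexp : ∀ u : ℝ, HasDerivAt (fun v => Real.exp (-(M * v)))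
      (Real.exp (-(M * u)) * (-M)) u := by
    intro u
    have h1 : HasDerivAt (fun v : ℝ => -(M * v)) (-M) u := by
      simpa [Pi.neg_def] using ((hasDerivAt_id u).const_mul M).neg
    exact h1.exp
  have hh : ∀ u, HasDerivAt h
      (Real.exp (-(M * u)) * (-M) * g u + Real.exp (-(M * u)) * E u - w u) u := by
    intro u
    exact ((hexp u).mul (hg u)).sub (hw_cont.integral_hasStrictDerivAt 0 u).hasDerivAt
  have hanti : AntitoneOn h (Icc (0:ℝ) 1) := by
    refine antitoneOn_of_deriv_nonpos (convex_Icc 0 1)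
      (fun u _ => (hh u).differentiableAt.continuousAt.continuousWithinAt)
      (fun u _ => (hh u).differentiableAt.differentiableWithinAt) ?_
    intro u hu
    rw [interior_Icc] at hu
    have hu' : u ∈ Icc (0:ℝ) 1 := Ioo_subset_Icc_self hu
    rw [(hh u).deriv]
    have hzg : ‖z u‖ ≤ g u := zle u hu'
    have hEu : E u = M * ‖z u‖ + S * ‖x' u‖ := by
      rw [hEdef]; simp only [hcl_eq u hu']
    have hwu : w u = Real.exp (-(M * u)) * (S * ‖x' u‖) := rfl
    rw [hEu, hwu]
    have hep : (0:ℝ) < Real.exp (-(M * u)) := Real.exp_pos _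
    nlinarith [mul_nonneg (mul_nonneg hep.le hM0) (sub_nonneg.2 hzg)]
  intro t ht
  have hht : h t ≤ h 0 := hanti (left_mem_Icc.2 zero_le_one) ht ht.1
  have hh0 : h 0 = 0 := by
    simp [hhdef, hgdef, intervalIntegral.integral_same]
  rw [hh0, hhdef, sub_nonpos] at hht
  -- bound the w-integral
  set I : ℝ := ∫ s in (0:ℝ)..1, ‖x' s‖ with hIdef
  have hI0 : 0 ≤ I := intervalIntegral.integral_nonneg zero_le_one fun s _ => norm_nonneg _
  have hw_le : (∫ s in (0:ℝ)..t, w s) ≤ ∫ s in (0:ℝ)..t, S * ‖x' s‖ := by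
    refine intervalIntegral.integral_mono_on ht.1 (hw_cont.intervalIntegrable 0 t)
      ((continuous_const.mul hx'.norm).intervalIntegrable 0 t) ?_
    intro s hs
    rw [hwdef]
    refine mul_le_of_le_one_left (mul_nonneg hS0 (norm_nonneg _)) ?_
    exact Real.exp_le_one_iff.2 (neg_nonpos.2 (mul_nonneg hM0 hs.1))
  have hsplit : (∫ s in (0:ℝ)..t, S * ‖x' s‖) ≤ S * I := by
    have h1 : (∫ s in (0:ℝ)..t, S * ‖x' s‖) + ∫ s in t..1, S * ‖x' s‖
        = ∫ s in (0:ℝ)..1, S * ‖x' s‖ :=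
      intervalIntegral.integral_add_adjacent_intervals
        ((continuous_const.mul hx'.norm).intervalIntegrable 0 t)
        ((continuous_const.mul hx'.norm).intervalIntegrable t 1)
    have h2 : 0 ≤ ∫ s in t..1, S * ‖x' s‖ :=
      intervalIntegral.integral_nonneg ht.2
        fun s _ => mul_nonneg hS0 (norm_nonneg _)
    have h3 : (∫ s in (0:ℝ)..1, S * ‖x' s‖) = S * I := by
      rw [hIdef, ← intervalIntegral.integral_const_mul]
    linarith
  have h2 : Real.exp (-(M * t)) * g t ≤ S * I := hht.trans (hw_le.trans hsplit)
  have h4 : g t ≤ Real.exp (M * t) * (S * I) := by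
    have h5 := mul_le_mul_of_nonneg_left h2 (Real.exp_pos (M * t)).le
    rwa [← mul_assoc, ← Real.exp_add, add_neg_cancel, Real.exp_zero, one_mul] at h5
  have h6 : Real.exp (M * t) ≤ Real.exp M :=
    Real.exp_le_exp.2 (by nlinarith [ht.1, ht.2])
  calc ‖z t‖ ≤ g t := zle t ht
    _ ≤ Real.exp (M * t) * (S * I) := h4
    _ ≤ Real.exp M * (S * I) :=
        mul_le_mul_of_nonneg_right h6 (mul_nonneg hS0 hI0)
    _ = S * I * Real.exp M := by ring
end

section
/- Let e, d ∈ ℕ, a ∈ ℝ^e, c ∈ [0,1] and r > 0. Let b : ℝ^e → ℝ^e be C² with b, ∇b, ∇²b bounded and let σ : ℝ^e → ℝ^{e×d} be C¹ with σ and ∇σ bounded. Then there exists a constant C > 0, depending only on r, ‖b‖_∞, ‖∇b‖_∞, ‖∇²b‖_∞, ‖σ‖_∞ and ‖∇σ‖_∞, with the following property: if x, x̃ : [0,1] → ℝ^d are C¹ with ∫₀¹ |x'_s| ds ≤ r and ∫₀¹ |x̃'_s| ds ≤ r, if y^0 : [0,1] → ℝ^e is the solution of (y^0)'_t = b(y^0_t),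 y^0_0 = a, and if ẑ, z̃ : [0,1] → ℝ^e are differentiable with ẑ_0 = z̃_0 = 0, ẑ'_t = ∫₀¹ ∇b(y^0_t + θ c ẑ_t)⟨ẑ_t⟩ dθ + σ(y^0_t + c ẑ_t) x'_t and z̃'_t = ∫₀¹ ∇b(y^0_t + θ c z̃_t)⟨z̃_t⟩ dθ + σ(y^0_t + c z̃_t) x̃'_t for all t, then sup_{t∈[0,1]} |ẑ_t − z̃_t| ≤ C ∫₀¹ |x'_s − x̃'_s| ds. -/
open Set MeasureTheory


lemma gronwall_aux {E : Type*} [NormedAddCommGroup E] [NormedSpace ℝ E]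
    (f : ℝ → E) (f' : ℝ → E) (K h : ℝ → ℝ) (hK : Continuous K) (hh : Continuous h)
    (hK0 : ∀ t, 0 ≤ K t) (hh0 : ∀ t, 0 ≤ h t)
    (hf : ∀ t ∈ Icc (0:ℝ) 1, HasDerivAt f (f' t) t) (hf0 : f 0 = 0)
    (hbd : ∀ t ∈ Icc (0:ℝ) 1, ‖f' t‖ ≤ K t * ‖f t‖ + h t) :
    ∀ t ∈ Icc (0:ℝ) 1, ‖f t‖ ≤ Real.exp (∫ s in (0:ℝ)..t, K s) * ∫ s in (0:ℝ)..t, h s := by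
  intro t ht
  set IK : ℝ → ℝ := fun u => ∫ s in (0:ℝ)..u, K s with hIKdef
  set Ih : ℝ → ℝ := fun u => ∫ s in (0:ℝ)..u, h s with hIhdef
  have hIKd : ∀ u : ℝ, HasDerivAt IK (K u) u := fun u =>
    intervalIntegral.integral_hasDerivAt_right (hK.intervalIntegrable _ _)
      (hK.stronglyMeasurableAtFilter _ _) hK.continuousAt
  have hIhd : ∀ u : ℝ, HasDerivAt Ih (h u) u := fun u =>
    intervalIntegral.integral_hasDerivAt_right (hh.intervalIntegrable _ _)
      (hh.stronglyMeasurableAtFilter _ _) hh.continuousAt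
  have hIKnn : ∀ u ∈ Icc (0:ℝ) 1, 0 ≤ IK u := fun u hu =>
    intervalIntegral.integral_nonneg hu.1 (fun s _ => hK0 s)
  refine le_of_forall_pos_le_add fun ε hε => ?_
  set δ : ℝ := ε / (Real.exp (IK t) * Real.exp t) with hδdef
  have hδ0 : 0 < δ := div_pos hε (by positivity)
  set B : ℝ → ℝ := fun u => Real.exp (IK u) * (Ih u + δ * Real.exp u) with hBdef
  set B' : ℝ → ℝ := fun u => K u * (Real.exp (IK u) * (Ih u + δ * Real.exp u)) +
      Real.exp (IK u) * (h u + δ * Real.exp u) with hB'def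
  have hBd : ∀ u, HasDerivAt B (B' u) u := by
    intro u
    have h1 := ((hIKd u).exp).mul ((hIhd u).add ((Real.hasDerivAt_exp u).const_mul δ))
    convert h1 using 1
    · rfl
    · rfl
    · rfl
    change K u * (Real.exp (IK u) * (Ih u + δ * Real.exp u)) + Real.exp (IK u) * (h u + δ * Real.exp u) = Real.exp (IK u) * K u * (Ih u + δ * Real.exp u) + Real.exp (IK u) * (h u + δ * Real.exp u)
    ring
  have key : ∀ u ∈ Icc (0:ℝ) 1, ‖f u‖ ≤ B u := by
    intro u hu
    refine image_norm_le_of_norm_deriv_right_lt_deriv_boundary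
      (f := f) (f' := f') (a := 0) (b := 1)
      (fun v hv => (hf v hv).continuousAt.continuousWithinAt)
      (fun v hv => (hf v (Ico_subset_Icc_self hv)).hasDerivWithinAt)
      ?_ hBd ?_ hu
    · simp only [hf0, norm_zero, hBdef]
      have h1 : IK 0 = 0 := intervalIntegral.integral_same
      have h2 : Ih 0 = 0 := intervalIntegral.integral_same
      rw [h1, h2]
      positivity
    · intro v hv hfv
      have hv' : v ∈ Icc (0:ℝ) 1 := Ico_subset_Icc_self hv
      have h1 : ‖f' v‖ ≤ K v * B v + h v := by
        calc ‖f' v‖ ≤ K v * ‖f v‖ + h v := hbd v hv'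
        _ = K v * B v + h v := by rw [hfv]
      refine h1.trans_lt ?_
      have he : (1:ℝ) ≤ Real.exp (IK v) := Real.one_le_exp (hIKnn v hv')
      have h2 : h v < Real.exp (IK v) * (h v + δ * Real.exp v) := by
        nlinarith [Real.exp_pos v, hδ0, hh0 v, he, mul_pos hδ0 (Real.exp_pos v)]
      simpa only [hBdef, hB'def] using add_lt_add_right h2 (K v * B v)
  calc ‖f t‖ ≤ B t := key t ht
  _ = Real.exp (IK t) * Ih t + ε := by
      simp only [hBdef, hδdef]
      have h1 : Real.exp (IK t) * Real.exp t ≠ 0 := by positivity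
      field_simp

set_option maxHeartbeats 2000000 in

/-- Stability in the driving path: there is a constant `C > 0`,
depending only on `r` and on the bounds for `b, ∇b, ∇²b, σ, ∇σ`, such that for any two
`C¹` drivers `x, x̃` with `∫₀¹|x'| ≤ r`, `∫₀¹|x̃'| ≤ r`, the corresponding rescaled
processes satisfy `sup_{t∈[0,1]} |ẑ_t − z̃_t| ≤ C ∫₀¹ |x'_s − x̃'_s| ds`. -/
theorem stmt_12 (e d : ℕ) (a : EuclideanSpace ℝ (Fin e)) (c : ℝ)
    (hc : c ∈ Set.Icc (0:ℝ) 1) (r Bb B1 B2 S0 S1 : ℝ) (hr : 0 < r) :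
    ∃ C > (0:ℝ),
      ∀ (b : EuclideanSpace ℝ (Fin e) → EuclideanSpace ℝ (Fin e))
        (σ : EuclideanSpace ℝ (Fin e) →
          (EuclideanSpace ℝ (Fin d) →L[ℝ] EuclideanSpace ℝ (Fin e))),
        ContDiff ℝ 2 b → (∀ y, ‖b y‖ ≤ Bb) → (∀ y, ‖fderiv ℝ b y‖ ≤ B1) →
        (∀ y, ‖fderiv ℝ (fderiv ℝ b) y‖ ≤ B2) →
        ContDiff ℝ 1 σ → (∀ y, ‖σ y‖ ≤ S0) → (∀ y, ‖fderiv ℝ σ y‖ ≤ S1) →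
        ∀ (x x' xt xt' : ℝ → EuclideanSpace ℝ (Fin d)),
          (∀ s, HasDerivAt x (x' s) s) → Continuous x' →
          (∀ s, HasDerivAt xt (xt' s) s) → Continuous xt' →
          (∫ s in (0:ℝ)..1, ‖x' s‖) ≤ r → (∫ s in (0:ℝ)..1, ‖xt' s‖) ≤ r →
          ∀ (y0 z zt : ℝ → EuclideanSpace ℝ (Fin e)),
            y0 0 = a → (∀ t ∈ Set.Icc (0:ℝ) 1, HasDerivAt y0 (b (y0 t)) t) →
            z 0 = 0 → zt 0 = 0 →
            (∀ t ∈ Set.Icc (0:ℝ) 1, HasDerivAt z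
              ((∫ θ in (0:ℝ)..1, fderiv ℝ b (y0 t + (θ * c) • z t) (z t)) +
                σ (y0 t + c • z t) (x' t)) t) →
            (∀ t ∈ Set.Icc (0:ℝ) 1, HasDerivAt zt
              ((∫ θ in (0:ℝ)..1, fderiv ℝ b (y0 t + (θ * c) • zt t) (zt t)) +
                σ (y0 t + c • zt t) (xt' t)) t) →
            ∀ t ∈ Set.Icc (0:ℝ) 1,
              ‖z t - zt t‖ ≤ C * ∫ s in (0:ℝ)..1, ‖x' s - xt' s‖ := by
  obtain ⟨hc0, hc1⟩ := hc
  set B1' := max B1 0 with hB1'def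
  set B2' := max B2 0 with hB2'def
  set S0' := max S0 0 with hS0'def
  set S1' := max S1 0 with hS1'def
  have hB1'0 : 0 ≤ B1' := le_max_right _ _
  have hB2'0 : 0 ≤ B2' := le_max_right _ _
  have hS0'0 : 0 ≤ S0' := le_max_right _ _
  have hS1'0 : 0 ≤ S1' := le_max_right _ _
  set M : ℝ := Real.exp B1' * (S0' * r) with hMdef
  have hM0 : 0 ≤ M := by positivity
  refine ⟨Real.exp (B1' + B2' * M + S1' * r) * S0' + 1, by positivity, ?_⟩
  intro b σ hb hBb hB1b hB2b hσ hS0b hS1b x x' xt xt' hx hx'c hxt hxt'c hxr hxtr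
    y0 z zt hy0a hy0 hz0 hzt0 hz hzt
  have hB1'' : ∀ y, ‖fderiv ℝ b y‖ ≤ B1' := fun y => (hB1b y).trans (le_max_left _ _)
  have hB2'' : ∀ y, ‖fderiv ℝ (fderiv ℝ b) y‖ ≤ B2' := fun y => (hB2b y).trans (le_max_left _ _)
  have hS0'' : ∀ y, ‖σ y‖ ≤ S0' := fun y => (hS0b y).trans (le_max_left _ _)
  have hS1'' : ∀ y, ‖fderiv ℝ σ y‖ ≤ S1' := fun y => (hS1b y).trans (le_max_left _ _)
  have hfb : Continuous (fderiv ℝ b) := hb.continuous_fderiv two_ne_zero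
  have hLb : ∀ u v : EuclideanSpace ℝ (Fin e),
      ‖fderiv ℝ b u - fderiv ℝ b v‖ ≤ B2' * ‖u - v‖ := by
    intro u v
    exact convex_univ.norm_image_sub_le_of_norm_fderiv_le
      (fun w _ => ((hb.fderiv_right (m := 1) le_rfl).differentiable one_ne_zero).differentiableAt)
      (fun w _ => hB2'' w) (mem_univ v) (mem_univ u)
  have hLσ : ∀ u v : EuclideanSpace ℝ (Fin e), ‖σ u - σ v‖ ≤ S1' * ‖u - v‖ := by
    intro u v
    exact convex_univ.norm_image_sub_le_of_norm_fderiv_le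
      (fun w _ => (hσ.differentiable one_ne_zero).differentiableAt)
      (fun w _ => hS1'' w) (mem_univ v) (mem_univ u)
  -- a priori bound on solutions
  have apriori : ∀ (w : ℝ → EuclideanSpace ℝ (Fin e)) (u' : ℝ → EuclideanSpace ℝ (Fin d)),
      w 0 = 0 → Continuous u' → (∫ s in (0:ℝ)..1, ‖u' s‖) ≤ r →
      (∀ t ∈ Set.Icc (0:ℝ) 1, HasDerivAt w
        ((∫ θ in (0:ℝ)..1, fderiv ℝ b (y0 t + (θ * c) • w t) (w t)) +
          σ (y0 t + c • w t) (u' t)) t) →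
      ∀ t ∈ Set.Icc (0:ℝ) 1, ‖w t‖ ≤ M := by
    intro w u' hw0 hu'c hur hw t ht
    have key := gronwall_aux w
      (fun s => (∫ θ in (0:ℝ)..1, fderiv ℝ b (y0 s + (θ * c) • w s) (w s)) +
        σ (y0 s + c • w s) (u' s))
      (fun _ => B1') (fun s => S0' * ‖u' s‖) continuous_const
      (continuous_const.mul hu'c.norm) (fun _ => hB1'0) (fun s => by positivity)
      hw hw0 ?_ t ht
    · refine key.trans ?_
      have h1 : (∫ _s in (0:ℝ)..t, (B1' : ℝ)) = t * B1' := by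
        simp [intervalIntegral.integral_const, smul_eq_mul]
      have h2 : Real.exp (∫ _s in (0:ℝ)..t, (B1':ℝ)) ≤ Real.exp B1' := by
        rw [h1]; exact Real.exp_le_exp.2 (by nlinarith [ht.1, ht.2])
      have h4 : (∫ s in (0:ℝ)..t, ‖u' s‖) ≤ ∫ s in (0:ℝ)..1, ‖u' s‖ :=
        intervalIntegral.integral_mono_interval le_rfl ht.1 ht.2
          (Filter.Eventually.of_forall fun s => norm_nonneg _)
          (hu'c.norm.intervalIntegrable _ _)
      have h3 : (∫ s in (0:ℝ)..t, S0' * ‖u' s‖) ≤ S0' * r := by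
        rw [intervalIntegral.integral_const_mul]
        exact mul_le_mul_of_nonneg_left (h4.trans hur) hS0'0
      have h5 : (0:ℝ) ≤ ∫ s in (0:ℝ)..t, S0' * ‖u' s‖ :=
        intervalIntegral.integral_nonneg ht.1 (fun s _ => by positivity)
      calc Real.exp (∫ _s in (0:ℝ)..t, (B1':ℝ)) * ∫ s in (0:ℝ)..t, S0' * ‖u' s‖
          ≤ Real.exp B1' * (S0' * r) := mul_le_mul h2 h3 h5 (Real.exp_pos _).le
      _ = M := rfl
    · intro s hs
      refine (norm_add_le _ _).trans ?_
      have hI : ‖∫ θ in (0:ℝ)..1, fderiv ℝ b (y0 s + (θ * c) • w s) (w s)‖ ≤ B1' * ‖w s‖ := by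
        have hh := intervalIntegral.norm_integral_le_of_norm_le_const (a := (0:ℝ)) (b := 1)
          (C := B1' * ‖w s‖) (f := fun θ => fderiv ℝ b (y0 s + (θ * c) • w s) (w s))
          (fun θ _ => ((fderiv ℝ b _).le_opNorm _).trans
            (mul_le_mul_of_nonneg_right (hB1'' _) (norm_nonneg _)))
        simpa using hh
      have hσb : ‖σ (y0 s + c • w s) (u' s)‖ ≤ S0' * ‖u' s‖ :=
        ((σ _).le_opNorm _).trans (mul_le_mul_of_nonneg_right (hS0'' _) (norm_nonneg _))
      exact add_le_add hI hσb
  have hztM := apriori zt xt' hzt0 hxt'c hxtr hzt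
  set I : ℝ := ∫ s in (0:ℝ)..1, ‖x' s - xt' s‖ with hIdef
  have hI0 : 0 ≤ I := intervalIntegral.integral_nonneg zero_le_one (fun s _ => norm_nonneg _)
  intro t ht
  have key := gronwall_aux (fun s => z s - zt s)
    (fun s => ((∫ θ in (0:ℝ)..1, fderiv ℝ b (y0 s + (θ * c) • z s) (z s)) +
        σ (y0 s + c • z s) (x' s))
      - ((∫ θ in (0:ℝ)..1, fderiv ℝ b (y0 s + (θ * c) • zt s) (zt s)) +
        σ (y0 s + c • zt s) (xt' s)))
    (fun s => B1' + B2' * M + S1' * ‖x' s‖) (fun s => S0' * ‖x' s - xt' s‖)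
    (continuous_const.add (continuous_const.mul hx'c.norm))
    (continuous_const.mul (hx'c.sub hxt'c).norm)
    (fun s => by positivity) (fun s => by positivity)
    (fun s hs => (hz s hs).sub (hzt s hs)) (by simp [hz0, hzt0]) ?_ t ht
  · refine key.trans ?_
    have hK1 : (∫ s in (0:ℝ)..t, (B1' + B2' * M + S1' * ‖x' s‖)) ≤ B1' + B2' * M + S1' * r := by
      rw [intervalIntegral.integral_add (f := fun _ => B1' + B2' * M) (g := fun s => S1' * ‖x' s‖) (intervalIntegrable_const)
        ((continuous_const.mul hx'c.norm).intervalIntegrable _ _),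
        intervalIntegral.integral_const, intervalIntegral.integral_const_mul]
      have h4 : (∫ s in (0:ℝ)..t, ‖x' s‖) ≤ r :=
        (intervalIntegral.integral_mono_interval le_rfl ht.1 ht.2
          (Filter.Eventually.of_forall fun s => norm_nonneg _)
          (hx'c.norm.intervalIntegrable _ _)).trans hxr
      simp only [smul_eq_mul, sub_zero]
      nlinarith [ht.1, ht.2, hB1'0, hB2'0, hS1'0, hM0,
        mul_le_mul_of_nonneg_left h4 hS1'0,
        mul_le_mul_of_nonneg_right ht.2 (add_nonneg hB1'0 (mul_nonneg hB2'0 hM0))]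
    have hh1 : (∫ s in (0:ℝ)..t, S0' * ‖x' s - xt' s‖) ≤ S0' * I := by
      rw [intervalIntegral.integral_const_mul]
      refine mul_le_mul_of_nonneg_left ?_ hS0'0
      exact intervalIntegral.integral_mono_interval le_rfl ht.1 ht.2
        (Filter.Eventually.of_forall fun s => norm_nonneg _)
        ((hx'c.sub hxt'c).norm.intervalIntegrable _ _)
    have hh0' : (0:ℝ) ≤ ∫ s in (0:ℝ)..t, S0' * ‖x' s - xt' s‖ :=
      intervalIntegral.integral_nonneg ht.1 (fun s _ => by positivity)
    calc Real.exp (∫ s in (0:ℝ)..t, (B1' + B2' * M + S1' * ‖x' s‖)) *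
          ∫ s in (0:ℝ)..t, S0' * ‖x' s - xt' s‖
        ≤ Real.exp (B1' + B2' * M + S1' * r) * (S0' * I) :=
          mul_le_mul (Real.exp_le_exp.2 hK1) hh1 hh0' (Real.exp_pos _).le
      _ ≤ (Real.exp (B1' + B2' * M + S1' * r) * S0' + 1) * I := by
          nlinarith [hI0, Real.exp_pos (B1' + B2' * M + S1' * r)]
  · -- the key differential bound
    intro s hs
    have hztM' := hztM s hs
    have hcz : Continuous fun θ : ℝ => fderiv ℝ b (y0 s + (θ * c) • z s) (z s) :=
      (hfb.comp (continuous_const.add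
        ((continuous_id.mul continuous_const).smul continuous_const))).clm_apply continuous_const
    have hczt : Continuous fun θ : ℝ => fderiv ℝ b (y0 s + (θ * c) • zt s) (zt s) :=
      (hfb.comp (continuous_const.add
        ((continuous_id.mul continuous_const).smul continuous_const))).clm_apply continuous_const
    rw [add_sub_add_comm]
    refine (norm_add_le _ _).trans ?_
    have hT1 : ‖(∫ θ in (0:ℝ)..1, fderiv ℝ b (y0 s + (θ * c) • z s) (z s)) -
        ∫ θ in (0:ℝ)..1, fderiv ℝ b (y0 s + (θ * c) • zt s) (zt s)‖
        ≤ (B1' + B2' * M) * ‖z s - zt s‖ := by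
      rw [← intervalIntegral.integral_sub (hcz.intervalIntegrable _ _)
        (hczt.intervalIntegrable _ _)]
      have hbd := intervalIntegral.norm_integral_le_of_norm_le_const (a := (0:ℝ)) (b := 1)
        (C := (B1' + B2' * M) * ‖z s - zt s‖)
        (f := fun θ => fderiv ℝ b (y0 s + (θ * c) • z s) (z s) -
          fderiv ℝ b (y0 s + (θ * c) • zt s) (zt s)) ?_
      · simpa using hbd
      · intro θ hθ
        have hθ' : θ ∈ Set.Ioc (0:ℝ) 1 := by rwa [Set.uIoc_of_le zero_le_one] at hθ
        have heq : fderiv ℝ b (y0 s + (θ * c) • z s) (z s) -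
            fderiv ℝ b (y0 s + (θ * c) • zt s) (zt s)
            = fderiv ℝ b (y0 s + (θ * c) • z s) (z s - zt s)
              + (fderiv ℝ b (y0 s + (θ * c) • z s) -
                fderiv ℝ b (y0 s + (θ * c) • zt s)) (zt s) := by
          simp only [map_sub, ContinuousLinearMap.sub_apply]
          abel
        simp only [heq]
        refine (norm_add_le _ _).trans ?_
        have e1 : ‖fderiv ℝ b (y0 s + (θ * c) • z s) (z s - zt s)‖ ≤ B1' * ‖z s - zt s‖ :=
          ((fderiv ℝ b _).le_opNorm _).trans
            (mul_le_mul_of_nonneg_right (hB1'' _) (norm_nonneg _))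
        have e3 : ‖fderiv ℝ b (y0 s + (θ * c) • z s) -
            fderiv ℝ b (y0 s + (θ * c) • zt s)‖ ≤ B2' * ‖z s - zt s‖ := by
          refine (hLb _ _).trans ?_
          have hdiff : (y0 s + (θ * c) • z s) - (y0 s + (θ * c) • zt s)
              = (θ * c) • (z s - zt s) := by
            simp only [smul_sub]; abel
          rw [hdiff, norm_smul, Real.norm_eq_abs]
          have hθc : |θ * c| ≤ 1 := by
            rw [abs_of_nonneg (by nlinarith [hθ'.1.le])]
            nlinarith [hθ'.1.le, hθ'.2]
          nlinarith [norm_nonneg (z s - zt s), hB2'0,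
            mul_le_mul_of_nonneg_right hθc (norm_nonneg (z s - zt s))]
        have e2 : ‖(fderiv ℝ b (y0 s + (θ * c) • z s) -
            fderiv ℝ b (y0 s + (θ * c) • zt s)) (zt s)‖ ≤ B2' * ‖z s - zt s‖ * M := by
          refine (ContinuousLinearMap.le_opNorm _ _).trans ?_
          exact mul_le_mul e3 hztM' (norm_nonneg _)
            (by positivity)
        calc _ ≤ B1' * ‖z s - zt s‖ + B2' * ‖z s - zt s‖ * M := add_le_add e1 e2
        _ = (B1' + B2' * M) * ‖z s - zt s‖ := by ring
    have hT2 : ‖σ (y0 s + c • z s) (x' s) - σ (y0 s + c • zt s) (xt' s)‖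
        ≤ S1' * ‖x' s‖ * ‖z s - zt s‖ + S0' * ‖x' s - xt' s‖ := by
      have heq : σ (y0 s + c • z s) (x' s) - σ (y0 s + c • zt s) (xt' s)
          = (σ (y0 s + c • z s) - σ (y0 s + c • zt s)) (x' s)
            + σ (y0 s + c • zt s) (x' s - xt' s) := by
        simp only [ContinuousLinearMap.sub_apply, map_sub]
        abel
      rw [heq]
      refine (norm_add_le _ _).trans (add_le_add ?_ ?_)
      · refine (ContinuousLinearMap.le_opNorm _ _).trans ?_
        have e3 : ‖σ (y0 s + c • z s) - σ (y0 s + c • zt s)‖ ≤ S1' * ‖z s - zt s‖ := by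
          refine (hLσ _ _).trans ?_
          have hdiff : (y0 s + c • z s) - (y0 s + c • zt s) = c • (z s - zt s) := by
            simp only [smul_sub]; abel
          rw [hdiff, norm_smul, Real.norm_eq_abs, abs_of_nonneg hc0]
          exact mul_le_mul_of_nonneg_left (mul_le_of_le_one_left (norm_nonneg _) hc1) hS1'0
        calc ‖σ (y0 s + c • z s) - σ (y0 s + c • zt s)‖ * ‖x' s‖
            ≤ (S1' * ‖z s - zt s‖) * ‖x' s‖ := mul_le_mul_of_nonneg_right e3 (norm_nonneg _)
          _ = S1' * ‖x' s‖ * ‖z s - zt s‖ := by ring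
      · exact (ContinuousLinearMap.le_opNorm _ _).trans
          (mul_le_mul_of_nonneg_right (hS0'' _) (norm_nonneg _))
    refine (add_le_add hT1 hT2).trans ?_
    have : (B1' + B2' * M) * ‖z s - zt s‖ +
        (S1' * ‖x' s‖ * ‖z s - zt s‖ + S0' * ‖x' s - xt' s‖)
        = (B1' + B2' * M + S1' * ‖x' s‖) * ‖z s - zt s‖ + S0' * ‖x' s - xt' s‖ := by ring
    exact this.le
end

section
/- Let n ∈ ℕ and let (Ω, F, P) be a probability space. Let X_k : Ω → ℝ^n (k ∈ ℕ) and X : Ω → ℝ^n be random vectors such that the law of each X_k is a centered Gaussian measure on ℝ^n and X_k → X almost surely as k → ∞. Then the law of X is a centered Gaussian measure on ℝ^n. -/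
open Set Filter MeasureTheory
open MeasureTheory ProbabilityTheory Real NNReal
open scoped ENNReal
open MeasureTheory ProbabilityTheory Real Filter NNReal
open scoped ENNReal

lemma aux_integrable_of_bounded {α : Type*} [MeasurableSpace α] (μ : Measure α)
    [IsFiniteMeasure μ] {g : α → ℝ} (hg : Measurable g) {C : ℝ}
    (hC : ∀ x, |g x| ≤ C) : Integrable g μ := by
  refine ⟨hg.aestronglyMeasurable, ?_⟩
  exact (HasFiniteIntegral.of_bounded (C := C) (Filter.Eventually.of_forall hC))

lemma aux_gauss_int (v : ℝ≥0) :
    ∫ x, rexp (-x^2) ∂(gaussianReal 0 v) = (Real.sqrt (1 + 2*v))⁻¹ := by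
  by_cases hv : v = 0
  · simp [hv, gaussianReal_zero_var]
  · rw [gaussianReal_of_var_ne_zero 0 hv]
    have hpdf : gaussianPDF 0 v = fun x => ((Real.toNNReal (gaussianPDFReal 0 v x) : ℝ≥0) : ℝ≥0∞) := by
      funext x; rfl
    rw [hpdf, integral_withDensity_eq_integral_smul
      (measurable_gaussianPDFReal 0 v).real_toNNReal]
    have hvpos : (0:ℝ) < v := lt_of_le_of_ne v.coe_nonneg (by exact_mod_cast (Ne.symm hv))
    have hb : (0:ℝ) < 1/(2*v) + 1 := by positivity
    have : ∀ x : ℝ, (Real.toNNReal (gaussianPDFReal 0 v x)) • rexp (-x^2)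
        = (Real.sqrt (2*π*v))⁻¹ * rexp (-(1/(2*v)+1) * x^2) := by
      intro x
      rw [NNReal.smul_def, smul_eq_mul, Real.coe_toNNReal _ (gaussianPDFReal_nonneg 0 v x),
        gaussianPDFReal]
      rw [mul_assoc, ← Real.exp_add]
      congr 2
      field_simp
      ring
    simp_rw [this]
    rw [integral_const_mul, integral_gaussian]
    rw [← Real.sqrt_inv, ← Real.sqrt_mul (by positivity)]

    rw [← Real.sqrt_inv]
    congr 1
    have hπ : (0:ℝ) < π := Real.pi_pos
    field_simp

lemma aux_gauss_map (w : ℝ≥0) :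
    (gaussianReal 0 1).map (fun x => Real.sqrt w * x) = gaussianReal 0 w := by
  have := gaussianReal_map_const_mul (μ := 0) (v := 1) (Real.sqrt w)
  simp only [mul_zero] at this
  convert this using 3
  ext
  simp [Real.sq_sqrt w.coe_nonneg]

lemma aux_real_limit {Ω : Type*} [MeasurableSpace Ω] (P : Measure Ω)
    [IsProbabilityMeasure P] (Z : ℕ → Ω → ℝ) (W : Ω → ℝ)
    (hZm : ∀ k, Measurable (Z k)) (hWm : Measurable W) (v : ℕ → ℝ≥0)
    (hZg : ∀ k, P.map (Z k) = gaussianReal 0 (v k))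
    (hconv : ∀ᵐ ω ∂P, Tendsto (fun k => Z k ω) atTop (nhds (W ω))) :
    ∃ u : ℝ≥0, P.map W = gaussianReal 0 u := by
  have hexp : Continuous fun t : ℝ => rexp (-t^2) := by fun_prop
  have hint : ∀ k, ∫ ω, rexp (-(Z k ω)^2) ∂P = (Real.sqrt (1 + 2*(v k)))⁻¹ := by
    intro k
    rw [← integral_map (hZm k).aemeasurable hexp.aestronglyMeasurable, hZg k, aux_gauss_int]
  set c := ∫ ω, rexp (-(W ω)^2) ∂P with hc
  have hW2 : Integrable (fun ω => rexp (-(W ω)^2)) P := by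
    refine aux_integrable_of_bounded P (by fun_prop) (C := 1) (fun ω => ?_)
    rw [abs_of_nonneg (Real.exp_nonneg _)]
    exact Real.exp_le_one_iff.2 (neg_nonpos.2 (sq_nonneg _))
  have hcpos : 0 < c := integral_exp_pos hW2
  have htend : Tendsto (fun k => ∫ ω, rexp (-(Z k ω)^2) ∂P) atTop (nhds c) := by
    refine tendsto_integral_of_dominated_convergence (fun _ => (1:ℝ))
      (fun k => (hexp.measurable.comp (hZm k)).aestronglyMeasurable) (integrable_const 1)
      (fun k => Filter.Eventually.of_forall fun ω => ?_) ?_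
    · rw [Real.norm_eq_abs, abs_of_nonneg (Real.exp_nonneg _)]
      exact Real.exp_le_one_iff.2 (neg_nonpos.2 (sq_nonneg _))
    · filter_upwards [hconv] with ω hω
      exact (hexp.tendsto _).comp hω
  simp_rw [hint] at htend
  have h1 : Tendsto (fun k => Real.sqrt (1 + 2*(v k : ℝ))) atTop (nhds c⁻¹) := by
    have := htend.inv₀ hcpos.ne'
    simpa [inv_inv] using this
  have h2 := h1.mul h1
  have heq : ∀ k, Real.sqrt (1 + 2*(v k:ℝ)) * Real.sqrt (1 + 2*(v k:ℝ)) = 1 + 2*(v k:ℝ) :=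
    fun k => Real.mul_self_sqrt (by positivity)
  simp_rw [heq] at h2
  have h3 : Tendsto (fun k => ((v k : ℝ))) atTop (nhds ((c⁻¹*c⁻¹ - 1)/2)) := by
    have h4 := (h2.sub_const 1).div_const 2
    have : (fun k => ((1 + 2*(v k:ℝ)) - 1)/2) = fun k => (v k : ℝ) := by
      funext k; ring
    rwa [this] at h4
  set u₀ : ℝ := (c⁻¹*c⁻¹ - 1)/2 with hu₀
  have hu0 : 0 ≤ u₀ := ge_of_tendsto' h3 (fun k => (v k).coe_nonneg)
  set u : ℝ≥0 := u₀.toNNReal with hu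
  have hvu : Tendsto (fun k => ((v k:ℝ))) atTop (nhds ((u : ℝ))) := by
    rwa [hu, Real.coe_toNNReal _ hu0]
  refine ⟨u, ?_⟩
  haveI : IsProbabilityMeasure (P.map W) := Measure.isProbabilityMeasure_map hWm.aemeasurable
  apply ext_of_forall_lintegral_eq_of_IsFiniteMeasure
  intro f
  obtain ⟨C0, hC0⟩ := f.bounded
  set C : ℝ := (f 0 : ℝ) + C0 with hCdef
  set g : ℝ → ℝ := fun x => (f x : ℝ) with hg
  have hgc : Continuous g := NNReal.continuous_coe.comp f.continuous
  have hgb : ∀ x, |g x| ≤ C := fun x => by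
    rw [abs_of_nonneg (f x).coe_nonneg]
    have h1 : dist (f x) (f 0) ≤ C0 := hC0 x 0
    rw [NNReal.dist_eq] at h1
    have := abs_le.1 h1
    linarith [this.1]
  have hint1 : Integrable g (P.map W) := aux_integrable_of_bounded _ hgc.measurable hgb
  have hint2 : Integrable g (gaussianReal 0 u) := aux_integrable_of_bounded _ hgc.measurable hgb
  rw [show (fun x => ((f x : ℝ≥0) : ℝ≥0∞)) = fun x => ((fun y => f y) x : ℝ≥0∞) from rfl]
  rw [lintegral_coe_eq_integral _ hint1, lintegral_coe_eq_integral _ hint2]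
  congr 1
  rw [integral_map hWm.aemeasurable hgc.aestronglyMeasurable,
    ← aux_gauss_map u, integral_map (measurable_const_mul _).aemeasurable
      hgc.aestronglyMeasurable]
  have key1 : Tendsto (fun k => ∫ ω, g (Z k ω) ∂P) atTop (nhds (∫ ω, g (W ω) ∂P)) := by
    refine tendsto_integral_of_dominated_convergence (fun _ => (C:ℝ))
      (fun k => (hgc.measurable.comp (hZm k)).aestronglyMeasurable) (integrable_const _)
      (fun k => Filter.Eventually.of_forall fun ω => hgb _) ?_
    filter_upwards [hconv] with ω hω
    exact (hgc.tendsto _).comp hω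
  have keq : ∀ k, ∫ ω, g (Z k ω) ∂P = ∫ x, g (Real.sqrt (v k) * x) ∂(gaussianReal 0 1) := by
    intro k
    rw [← integral_map (hZm k).aemeasurable hgc.aestronglyMeasurable, hZg k,
      ← aux_gauss_map (v k), integral_map (measurable_const_mul _).aemeasurable
        hgc.aestronglyMeasurable]
  simp_rw [keq] at key1
  have key2 : Tendsto (fun k => ∫ x, g (Real.sqrt (v k) * x) ∂(gaussianReal 0 1)) atTop
      (nhds (∫ x, g (Real.sqrt u * x) ∂(gaussianReal 0 1))) := by
    refine tendsto_integral_of_dominated_convergence (fun _ => (C:ℝ))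
      (fun k => (hgc.measurable.comp (measurable_const_mul _)).aestronglyMeasurable)
      (integrable_const _)
      (fun k => Filter.Eventually.of_forall fun x => hgb _) ?_
    refine Filter.Eventually.of_forall fun x => ?_
    have hs : Tendsto (fun k => Real.sqrt (v k)) atTop (nhds (Real.sqrt u)) :=
      (Real.continuous_sqrt.tendsto _).comp hvu
    exact (hgc.tendsto _).comp (hs.mul_const x)
  exact tendsto_nhds_unique key1 key2


/-- A measure on a finite-dimensional (normed) real vector space is a centered Gaussian
measure if its pushforward under every continuous linear functional is a (possibly
degenerate) real Gaussian measure with mean zero. -/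
def IsCenteredGaussian {V : Type*} [NormedAddCommGroup V] [NormedSpace ℝ V]
    [MeasurableSpace V] [BorelSpace V] (μ : MeasureTheory.Measure V) : Prop :=
  ∀ L : V →L[ℝ] ℝ, ∃ v : NNReal, μ.map L = ProbabilityTheory.gaussianReal 0 v

/-- If random vectors `X_k` in `ℝ^n` have centered Gaussian laws and
`X_k → X` almost surely, then the law of `X` is a centered Gaussian measure. -/
theorem stmt_15 (n : ℕ) {Ω : Type*} [MeasurableSpace Ω] (P : MeasureTheory.Measure Ω)
    [MeasureTheory.IsProbabilityMeasure P]
    (X : ℕ → Ω → EuclideanSpace ℝ (Fin n)) (Y : Ω → EuclideanSpace ℝ (Fin n))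
    (hXm : ∀ k, Measurable (X k)) (hYm : Measurable Y)
    (hXg : ∀ k, IsCenteredGaussian (P.map (X k)))
    (hconv : ∀ᵐ ω ∂P, Filter.Tendsto (fun k => X k ω) Filter.atTop (nhds (Y ω))) :
    IsCenteredGaussian (P.map Y) := by
  intro L
  have hLm : Measurable L := L.continuous.measurable
  choose v hv using fun k => hXg k L
  have hZg : ∀ k, P.map (fun ω => L (X k ω)) = ProbabilityTheory.gaussianReal 0 (v k) := by
    intro k
    rw [show (fun ω => L (X k ω)) = ⇑L ∘ X k from rfl,
      ← MeasureTheory.Measure.map_map hLm (hXm k)]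
    exact hv k
  have hconv' : ∀ᵐ ω ∂P, Filter.Tendsto (fun k => L (X k ω)) Filter.atTop (nhds (L (Y ω))) := by
    filter_upwards [hconv] with ω hω
    exact ((L.continuous.tendsto _).comp hω)
  obtain ⟨u, hu⟩ := aux_real_limit P (fun k ω => L (X k ω)) (fun ω => L (Y ω))
    (fun k => hLm.comp (hXm k)) (hLm.comp hYm) v hZg hconv'
  refine ⟨u, ?_⟩
  rw [MeasureTheory.Measure.map_map hLm hYm]
  exact hu.symm ▸ hu
end
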